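/- Let α ∈ (-1,1) and let Φ_m(z;α) be defined by the Szegő recurrence Φ_0 = 1, Φ_0* = 1, Φ_{m+1}(z) = zΦ_m(z) - αΦ_m*(z), Φ_{m+1}*(z) = Φ_m*(z) - αzΦ_m(z). Set ρ = sqrt(1-α²) and φ_m(z;α) = ρ^{-m}Φ_m(z;α). Then for every m ≥ 0 and every complex z with √z defined via the principal branch, φ_m(z;α) = z^{m/2}( U_m((z+1)/(2ρ√z)) - ((1+α)/(ρ√z))·U_{m-1}((z+1)/(2ρ√z)) ), where U_m is the Chebyshev polynomial of the second kind and U_{-1} ≡ 0. -/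

import Mathlib

/-- Monic Geronimus polynomials `Φ_m` and their reciprocals `Φ_m^*`, defined by the
Szegő recurrence with constant recurrence coefficient `α`. -/
noncomputable def geronimusPhi (α : ℂ) : ℕ → (ℂ → ℂ) × (ℂ → ℂ)
  | 0 => (fun _ => 1, fun _ => 1)
  | m + 1 =>
      (fun z => z * (geronimusPhi α m).1 z - α * (geronimusPhi α m).2 z,
       fun z => (geronimusPhi α m).2 z - α * z * (geronimusPhi α m).1 z)

lemma geronimus_key (α ρ s : ℂ) (hρ : ρ ≠ 0) (hρ2 : ρ * ρ = 1 - α ^ 2) (hs : s ≠ 0)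
    (m : ℕ) :
    (geronimusPhi α m).1 (s * s) = ρ ^ m * s ^ m *
        ((Polynomial.Chebyshev.U ℂ m).eval ((s * s + 1) / (2 * ρ * s))
          - ((1 + α) / (ρ * s)) *
            (Polynomial.Chebyshev.U ℂ ((m : ℤ) - 1)).eval ((s * s + 1) / (2 * ρ * s))) ∧
    (geronimusPhi α m).2 (s * s) = ρ ^ m * s ^ m *
        ((Polynomial.Chebyshev.U ℂ m).eval ((s * s + 1) / (2 * ρ * s))
          - ((1 + α) * s / ρ) *
            (Polynomial.Chebyshev.U ℂ ((m : ℤ) - 1)).eval ((s * s + 1) / (2 * ρ * s))) := by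
  have hα2 : α ^ 2 = 1 - ρ * ρ := by linear_combination hρ2
  induction m with
  | zero =>
      simp [geronimusPhi, Polynomial.Chebyshev.U_zero, Polynomial.Chebyshev.U_neg_one]
  | succ m ih =>
      obtain ⟨ih1, ih2⟩ := ih
      have hrec : (Polynomial.Chebyshev.U ℂ ((m : ℤ) + 1)).eval ((s * s + 1) / (2 * ρ * s))
          = 2 * ((s * s + 1) / (2 * ρ * s)) *
              (Polynomial.Chebyshev.U ℂ (m : ℤ)).eval ((s * s + 1) / (2 * ρ * s))
            - (Polynomial.Chebyshev.U ℂ ((m : ℤ) - 1)).eval ((s * s + 1) / (2 * ρ * s)) := by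
        have h := Polynomial.Chebyshev.U_add_two ℂ ((m : ℤ) - 1)
        have h1 : (m : ℤ) - 1 + 2 = (m : ℤ) + 1 := by ring
        have h2 : (m : ℤ) - 1 + 1 = (m : ℤ) := by ring
        rw [h1, h2] at h
        simp [h]
      have hc1 : ((m + 1 : ℕ) : ℤ) = (m : ℤ) + 1 := by push_cast; ring
      have hc2 : (m : ℤ) + 1 - 1 = (m : ℤ) := by ring
      constructor
      · show (s * s) * (geronimusPhi α m).1 (s * s) - α * (geronimusPhi α m).2 (s * s) = _
        rw [ih1, ih2, hc1, hc2, hrec]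
        field_simp
        linear_combination (s^2 * s^m * ρ^m *
          (Polynomial.Chebyshev.U ℂ ((m:ℤ) - 1)).eval ((s^2+1)/(s*2*ρ))) * hρ2
      · show (geronimusPhi α m).2 (s * s) - α * (s * s) * (geronimusPhi α m).1 (s * s) = _
        rw [ih1, ih2, hc1, hc2, hrec]
        field_simp
        linear_combination (s^2 * s^m * ρ^m *
          (Polynomial.Chebyshev.U ℂ ((m:ℤ) - 1)).eval ((s^2+1)/(s*2*ρ))) * hρ2

theorem stmt_10 (α : ℝ) (hα : α ∈ Set.Ioo (-1 : ℝ) 1) (m : ℕ) (z : ℂ) (hz : z ≠ 0) :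
    ((Real.sqrt (1 - α ^ 2) : ℂ)) ^ (-(m : ℤ)) * (geronimusPhi (α : ℂ) m).1 z
      = (z ^ ((1 : ℂ) / 2)) ^ m *
          ((Polynomial.Chebyshev.U ℂ m).eval
              ((z + 1) / (2 * (Real.sqrt (1 - α ^ 2) : ℂ) * z ^ ((1 : ℂ) / 2)))
            - ((1 + (α : ℂ)) / ((Real.sqrt (1 - α ^ 2) : ℂ) * z ^ ((1 : ℂ) / 2))) *
                (Polynomial.Chebyshev.U ℂ ((m : ℤ) - 1)).eval
                  ((z + 1) / (2 * (Real.sqrt (1 - α ^ 2) : ℂ) * z ^ ((1 : ℂ) / 2)))) := by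
  obtain ⟨h1, h2⟩ := hα
  have h1α : (0 : ℝ) < 1 - α ^ 2 := by nlinarith
  set ρ : ℂ := (Real.sqrt (1 - α ^ 2) : ℂ) with hρdef
  have hρ : ρ ≠ 0 := by
    simp [hρdef, Complex.ofReal_ne_zero]
    positivity
  have hρ2 : ρ * ρ = 1 - (α : ℂ) ^ 2 := by
    rw [hρdef, ← Complex.ofReal_mul, Real.mul_self_sqrt h1α.le]
    push_cast
    ring
  set s : ℂ := z ^ ((1 : ℂ) / 2) with hsdef
  have hs : s * s = z := by
    rw [hsdef, ← Complex.cpow_add _ _ hz]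
    norm_num
  have hs0 : s ≠ 0 := by
    intro h
    rw [h, mul_zero] at hs
    exact hz hs.symm
  have key := (geronimus_key (α : ℂ) ρ s hρ hρ2 hs0 m).1
  rw [hs] at key
  rw [key, zpow_neg, zpow_natCast]
  rw [← mul_assoc, ← mul_assoc, inv_mul_cancel₀ (pow_ne_zero m hρ), one_mul]
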